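/- Define I_n(a,b,c,d) = Σ_{P ∈ M_n} a^{hor(P)} b^{up(P)} c^{sh_u(P)} d^{sh_h(P)}, the joint distribution polynomial over Motzkin paths of length n. Then I_0(a,b,c,d) = 1 and, for n ≥ 1, I_n(a,b,c,d) = a·I_{n-1}(a,b,c,d) + b·Σ_{k=2}^{n} I_{k-2}(ad, bc, c, d)·I_{n-k}(a,b,c,d). -/

import Mathlib

/-- Steps of a Motzkin path: up, horizontal, down. -/
inductive MStep : Type
  | U | H | D
deriving DecidableEq

instance : Fintype MStep :=
  ⟨{MStep.U, MStep.H, MStep.D}, fun x => by cases x <;> simp⟩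

/-- The height of the `i`-th step of `P` (the `y`-coordinate of its starting point),
i.e. the number of up steps minus the number of down steps among the first `i` steps. -/
def stepHeight (P : List MStep) (i : ℕ) : ℕ :=
  (P.take i).count MStep.U - (P.take i).count MStep.D

/-- `P` is a Motzkin path: every prefix has at least as many up steps as down steps,
and the whole word has equally many up and down steps. -/
def IsMotzkin (P : List MStep) : Prop :=
  (∀ i ≤ P.length, (P.take i).count MStep.D ≤ (P.take i).count MStep.U) ∧
    P.count MStep.D = P.count MStep.U

def upCount (P : List MStep) : ℕ := P.count MStep.U
def horCount (P : List MStep) : ℕ := P.count MStep.H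
def downCount (P : List MStep) : ℕ := P.count MStep.D

/-- Sum of the heights of all steps of `P` equal to `s`. -/
def shSum (s : MStep) (P : List MStep) : ℕ :=
  ∑ i ∈ Finset.range P.length, if P.getD i MStep.H = s then stepHeight P i else 0

/-- The area between a Motzkin path and the x-axis (sum over steps of the
average of the heights of the two endpoints of the step). -/
def area (P : List MStep) : ℕ :=
  (∑ i ∈ Finset.range P.length, (stepHeight P i + stepHeight P (i + 1))) / 2

open Classical in
/-- The finite set of Motzkin paths of length `n`. -/
noncomputable def motzkinSet (n : ℕ) : Finset (List MStep) :=
  ((Finset.univ : Finset (Fin n → MStep)).image fun f => List.ofFn f).filter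
    fun P => IsMotzkin P

/-- The joint distribution polynomial
`I n a b c d = ∑_{P ∈ M_n} a^{hor P} b^{up P} c^{sh_u P} d^{sh_h P}`. -/
noncomputable def Ipoly {R : Type*} [CommSemiring R] (n : ℕ) (a b c d : R) : R :=
  ∑ P ∈ motzkinSet n,
    a ^ horCount P * b ^ upCount P * c ^ shSum MStep.U P * d ^ shSum MStep.H P

-- ===== auxiliary lemmas =====

lemma mem_motzkinSet {n : ℕ} {P : List MStep} :
    P ∈ motzkinSet n ↔ P.length = n ∧ IsMotzkin P := by
  classical
  simp only [motzkinSet, Finset.mem_filter, Finset.mem_image, Finset.mem_univ, true_and]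
  constructor
  · rintro ⟨⟨f, rfl⟩, h⟩; exact ⟨List.length_ofFn (f := f), h⟩
  · rintro ⟨hl, h⟩
    subst hl
    exact ⟨⟨P.get, List.ofFn_get P⟩, h⟩

lemma count_getD_sum (s : MStep) (L : List MStep) :
    L.count s = ∑ i ∈ Finset.range L.length, (if L.getD i MStep.H = s then 1 else 0) := by
  induction L with
  | nil => simp
  | cons x L ih =>
    rw [List.length_cons, Finset.sum_range_succ']
    simp only [List.getD_cons_succ, List.getD_cons_zero, List.count_cons, ← ih]
    rcases eq_or_ne x s with h | h <;> simp [h]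

lemma stepHeight_zero (P : List MStep) : stepHeight P 0 = 0 := by simp [stepHeight]

lemma sum_range_add' {M : Type*} [AddCommMonoid M] (f : ℕ → M) (m n : ℕ) :
    ∑ i ∈ Finset.range (m + n), f i =
      (∑ i ∈ Finset.range m, f i) + ∑ i ∈ Finset.range n, f (m + i) := by
  induction n with
  | zero => simp
  | succ n ih =>
    rw [show m + (n+1) = (m+n)+1 from rfl, Finset.sum_range_succ, ih,
      Finset.sum_range_succ, add_assoc]

-- H-cons lemmas
lemma stepHeight_cons_H (Q : List MStep) (i : ℕ) :
    stepHeight (MStep.H :: Q) (i + 1) = stepHeight Q i := by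
  simp [stepHeight, List.take_succ_cons, List.count_cons]

lemma shSum_cons_H (s : MStep) (Q : List MStep) : shSum s (MStep.H :: Q) = shSum s Q := by
  unfold shSum
  rw [List.length_cons, Finset.sum_range_succ']
  simp [stepHeight_cons_H, stepHeight_zero]

lemma isMotzkin_cons_H {Q : List MStep} : IsMotzkin (MStep.H :: Q) ↔ IsMotzkin Q := by
  constructor
  · rintro ⟨h1, h2⟩
    refine ⟨fun i hi => ?_, by simpa [List.count_cons] using h2⟩
    have := h1 (i + 1) (by simp; omega)
    simpa [List.take_succ_cons, List.count_cons] using this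
  · rintro ⟨h1, h2⟩
    refine ⟨fun i hi => ?_, by simpa [List.count_cons] using h2⟩
    cases i with
    | zero => simp
    | succ j =>
      have := h1 j (by simp at hi; omega)
      simpa [List.take_succ_cons, List.count_cons] using this

-- ===== structural lemmas for U :: Q ++ D :: S =====
section Struct
variable (Q S : List MStep)

lemma take_P_succ {i : ℕ} (hi : i ≤ Q.length) :
    (MStep.U :: (Q ++ MStep.D :: S)).take (i + 1) = MStep.U :: Q.take i := by
  rw [List.take_succ_cons, List.take_append_of_le_length hi]

lemma take_P_top (i : ℕ) :
    (MStep.U :: (Q ++ MStep.D :: S)).take (Q.length + 2 + i) =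
      MStep.U :: (Q ++ MStep.D :: S.take i) := by
  have : Q.length + 2 + i = (Q.length + (1 + i)) + 1 := by omega
  rw [this, List.take_succ_cons, List.take_append]
  simp [List.take_cons]

lemma getD_P_zero : (MStep.U :: (Q ++ MStep.D :: S)).getD 0 MStep.H = MStep.U := rfl

lemma getD_P_mid {i : ℕ} (hi : i < Q.length) :
    (MStep.U :: (Q ++ MStep.D :: S)).getD (i + 1) MStep.H = Q.getD i MStep.H := by
  rw [List.getD_cons_succ, List.getD_append _ _ _ _ hi]

lemma getD_P_D : (MStep.U :: (Q ++ MStep.D :: S)).getD (Q.length + 1) MStep.H = MStep.D := by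
  rw [List.getD_cons_succ, List.getD_append_right _ _ _ _ (le_refl _)]
  simp

lemma getD_P_top (i : ℕ) :
    (MStep.U :: (Q ++ MStep.D :: S)).getD (Q.length + 2 + i) MStep.H = S.getD i MStep.H := by
  have : Q.length + 2 + i = (Q.length + 1 + i) + 1 := by omega
  rw [this, List.getD_cons_succ, List.getD_append_right _ _ _ _ (by omega)]
  have : Q.length + 1 + i - Q.length = i + 1 := by omega
  rw [this, List.getD_cons_succ]

variable (hQ : IsMotzkin Q)
include hQ

lemma stepHeight_P_mid {i : ℕ} (hi : i ≤ Q.length) :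
    stepHeight (MStep.U :: (Q ++ MStep.D :: S)) (i + 1) = stepHeight Q i + 1 := by
  unfold stepHeight
  rw [take_P_succ Q S hi]
  have hc := hQ.1 i hi
  simp only [List.count_cons]
  simp only [show (MStep.U == MStep.U) = true from rfl,
    show (MStep.U == MStep.D) = false from rfl, if_true, if_false, Bool.false_eq_true]
  omega

lemma stepHeight_P_top (i : ℕ) :
    stepHeight (MStep.U :: (Q ++ MStep.D :: S)) (Q.length + 2 + i) = stepHeight S i := by
  unfold stepHeight
  rw [take_P_top]
  have h2 := hQ.2
  simp only [List.count_cons, List.count_append, List.count_cons]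
  simp only [show (MStep.U == MStep.U) = true from rfl,
    show (MStep.U == MStep.D) = false from rfl,
    show (MStep.D == MStep.U) = false from rfl,
    show (MStep.D == MStep.D) = true from rfl, if_true, if_false, Bool.false_eq_true]
  omega

lemma shSum_P (s : MStep) (hs : s ≠ MStep.D) :
    shSum s (MStep.U :: (Q ++ MStep.D :: S)) = shSum s Q + Q.count s + shSum s S := by
  have hlen : (MStep.U :: (Q ++ MStep.D :: S)).length = (Q.length + 2) + S.length := by
    simp; omega
  unfold shSum
  rw [hlen, sum_range_add']
  have htop : ∀ i ∈ Finset.range S.length,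
      (if (MStep.U :: (Q ++ MStep.D :: S)).getD (Q.length + 2 + i) MStep.H = s then
        stepHeight (MStep.U :: (Q ++ MStep.D :: S)) (Q.length + 2 + i) else 0) =
      (if S.getD i MStep.H = s then stepHeight S i else 0) := by
    intro i _
    rw [getD_P_top, stepHeight_P_top Q S hQ]
  rw [Finset.sum_congr rfl htop]
  congr 1
  rw [show Q.length + 2 = (Q.length + 1) + 1 from rfl, Finset.sum_range_succ,
    Finset.sum_range_succ']
  rw [getD_P_D]
  simp only [if_neg (Ne.symm hs), add_zero]
  have h0 : (if (MStep.U :: (Q ++ MStep.D :: S)).getD 0 MStep.H = s then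
      stepHeight (MStep.U :: (Q ++ MStep.D :: S)) 0 else 0) = 0 := by
    rw [stepHeight_zero]; simp
  rw [h0, add_zero]
  have hmid : ∀ i ∈ Finset.range Q.length,
      (if (MStep.U :: (Q ++ MStep.D :: S)).getD (i + 1) MStep.H = s then
        stepHeight (MStep.U :: (Q ++ MStep.D :: S)) (i + 1) else 0) =
      (if Q.getD i MStep.H = s then stepHeight Q i else 0) +
      (if Q.getD i MStep.H = s then 1 else 0) := by
    intro i hi
    rw [Finset.mem_range] at hi
    rw [getD_P_mid Q S hi, stepHeight_P_mid Q S hQ (le_of_lt hi)]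
    split <;> simp
  rw [Finset.sum_congr rfl hmid, Finset.sum_add_distrib, ← count_getD_sum]

lemma isMotzkin_P (hS : IsMotzkin S) : IsMotzkin (MStep.U :: (Q ++ MStep.D :: S)) := by
  have hlen : (MStep.U :: (Q ++ MStep.D :: S)).length = Q.length + 2 + S.length := by
    simp; omega
  constructor
  · intro i hi
    rw [hlen] at hi
    rcases Nat.lt_or_ge i (Q.length + 2) with h | h
    · cases i with
      | zero => simp
      | succ j =>
        have hj : j ≤ Q.length := by omega
        rw [take_P_succ Q S hj]
        have hc := hQ.1 j hj
        simp only [List.count_cons, show (MStep.U == MStep.U) = true from rfl,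
          show (MStep.U == MStep.D) = false from rfl, if_true, if_false, Bool.false_eq_true]
        omega
    · obtain ⟨j, rfl⟩ : ∃ j, i = Q.length + 2 + j := ⟨i - (Q.length + 2), by omega⟩
      have hj : j ≤ S.length := by omega
      rw [take_P_top]
      have hc := hS.1 j hj
      have h2 := hQ.2
      simp only [List.count_cons, List.count_append, List.count_cons,
        show (MStep.U == MStep.U) = true from rfl, show (MStep.U == MStep.D) = false from rfl,
        show (MStep.D == MStep.U) = false from rfl, show (MStep.D == MStep.D) = true from rfl,
        if_true, if_false, Bool.false_eq_true]
      omega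
  · have h2 := hQ.2
    have h2' := hS.2
    simp only [List.count_cons, List.count_append, List.count_cons,
      show (MStep.U == MStep.U) = true from rfl, show (MStep.U == MStep.D) = false from rfl,
      show (MStep.D == MStep.U) = false from rfl, show (MStep.D == MStep.D) = true from rfl,
      if_true, if_false, Bool.false_eq_true]
    omega

end Struct

-- ===== uniqueness =====
lemma no_prefix {Q Q' S S' : List MStep} (hQ : IsMotzkin Q) (hQ' : IsMotzkin Q')
    (h : Q ++ MStep.D :: S = Q' ++ MStep.D :: S') : ¬ Q.length < Q'.length := by
  intro hlt
  have e1 : List.take (Q.length + 1) (Q ++ MStep.D :: S) = Q ++ [MStep.D] := by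
    rw [List.take_append, List.take_of_length_le (by omega)]; simp
  have e2 : List.take (Q.length + 1) (Q' ++ MStep.D :: S') = Q'.take (Q.length + 1) :=
    List.take_append_of_le_length (by omega)
  have h1 : Q'.take (Q.length + 1) = Q ++ [MStep.D] := by rw [← e2, ← h, e1]
  have hc := hQ'.1 (Q.length + 1) (by omega)
  rw [h1] at hc
  have h2 := hQ.2
  simp [List.count_append] at hc
  omega

lemma decomp_unique {Q Q' S S' : List MStep} (hQ : IsMotzkin Q) (hQ' : IsMotzkin Q')
    (h : Q ++ MStep.D :: S = Q' ++ MStep.D :: S') : Q = Q' ∧ S = S' := by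
  have hl : Q.length = Q'.length := by
    have h1 := no_prefix hQ hQ' h
    have h2 := no_prefix hQ' hQ h.symm
    omega
  obtain ⟨h1, h2⟩ := List.append_inj h hl
  exact ⟨h1, by simpa using h2⟩

-- ===== existence of the decomposition =====
lemma exists_decomp {T : List MStep} (h : IsMotzkin (MStep.U :: T)) :
    ∃ Q S : List MStep, IsMotzkin Q ∧ IsMotzkin S ∧ T = Q ++ MStep.D :: S := by
  classical
  set P := MStep.U :: T with hP
  have hlenP : P.length = T.length + 1 := rfl
  have hex : ∃ j, 1 ≤ j ∧ (P.take j).count MStep.D = (P.take j).count MStep.U := by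
    refine ⟨P.length, by simp [hlenP], ?_⟩
    rw [List.take_length]; exact h.2
  obtain ⟨j, ⟨hj1, hj2⟩, hjle, hmin⟩ :
      ∃ j, (1 ≤ j ∧ (P.take j).count MStep.D = (P.take j).count MStep.U) ∧ j ≤ P.length ∧
        ∀ m, m < j → ¬ (1 ≤ m ∧ (P.take m).count MStep.D = (P.take m).count MStep.U) :=
    ⟨Nat.find hex, Nat.find_spec hex,
      Nat.find_le ⟨by simp [hlenP], by rw [List.take_length]; exact h.2⟩,
      fun m hm => Nat.find_min hex hm⟩
  have hjge : 2 ≤ j := by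
    rcases Nat.lt_or_ge j 2 with hlt | hge
    · exfalso
      have hj1' : j = 1 := by omega
      rw [hj1'] at hj2
      simp [hP, List.take_succ_cons] at hj2
    · exact hge
  have hi_lt : j - 1 < P.length := by omega
  have htake : P.take j = P.take (j-1) ++ [P.getD (j-1) MStep.H] := by
    conv_lhs => rw [show j = (j-1)+1 by omega]
    rw [List.take_succ, List.getElem?_eq_getElem hi_lt, List.getD_eq_getElem _ _ hi_lt]
    rfl
  have hlt_pre : (P.take (j-1)).count MStep.D < (P.take (j-1)).count MStep.U := by
    have hne := hmin (j-1) (by omega)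
    have hle := h.1 (j-1) (by omega)
    have : ¬ (P.take (j-1)).count MStep.D = (P.take (j-1)).count MStep.U :=
      fun hc => hne ⟨by omega, hc⟩
    omega
  have hD : P.getD (j-1) MStep.H = MStep.D := by
    rcases hx : P.getD (j-1) MStep.H with _ | _ | _
    · exfalso; rw [htake, hx] at hj2; simp [List.count_append] at hj2; omega
    · exfalso; rw [htake, hx] at hj2; simp [List.count_append] at hj2; omega
    · rfl
  have hbal : (P.take (j-1)).count MStep.D + 1 = (P.take (j-1)).count MStep.U := by
    rw [htake, hD] at hj2
    simp [List.count_append] at hj2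
    omega
  have hj2lt : j - 2 < T.length := by omega
  have hpre : P.take (j-1) = MStep.U :: T.take (j-2) := by
    rw [hP, show j-1 = (j-2)+1 by omega, List.take_succ_cons]
  have hTD : T.getD (j-2) MStep.H = MStep.D := by
    rw [← hD]
    conv_rhs => rw [hP, show j-1 = (j-2)+1 by omega]
    rw [List.getD_cons_succ]
  have hTdec : T = T.take (j-2) ++ MStep.D :: T.drop (j-1) := by
    conv_lhs => rw [← List.take_append_drop (j-2) T]
    congr 1
    have hg : T[j-2]'hj2lt = MStep.D := by
      rw [← List.getD_eq_getElem T MStep.H hj2lt]; exact hTD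
    rw [List.drop_eq_getElem_cons hj2lt, hg, show (j-2)+1 = j-1 by omega]
  have hdropP : P.drop j = T.drop (j-1) := by
    conv_lhs => rw [hP, show j = (j-1)+1 by omega]
    rw [List.drop_succ_cons]
  refine ⟨T.take (j-2), T.drop (j-1), ?_, ?_, hTdec⟩
  · constructor
    · intro i hi
      rw [List.length_take] at hi
      have hiq : i ≤ j - 2 := le_trans hi (min_le_left _ _)
      rw [List.take_take, min_eq_left hiq]
      have hne := hmin (i+1) (by omega)
      have hle := h.1 (i+1) (by omega)
      have hPt : P.take (i+1) = MStep.U :: T.take i := by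
        rw [hP, List.take_succ_cons]
      rw [hPt] at hle hne
      have hneq : ¬ (MStep.U :: T.take i).count MStep.D = (MStep.U :: T.take i).count MStep.U :=
        fun hc => hne ⟨by omega, hc⟩
      simp [List.count_cons] at hle hneq
      omega
    · have : (T.take (j-2)).length = j - 2 := by rw [List.length_take]; omega
      rw [hpre] at hbal
      simp [List.count_cons] at hbal
      omega
  · constructor
    · intro i hi
      have hil : i ≤ T.length - (j-1) := by rwa [List.length_drop] at hi
      have hkey := h.1 (j + i) (by rw [hlenP]; omega)
      rw [List.take_add, hdropP] at hkey
      simp only [List.count_append] at hkey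
      omega
    · have h2 := h.2
      have hPdec : P.take j ++ T.drop (j-1) = P := by
        rw [← hdropP, List.take_append_drop]
      rw [← hPdec] at h2
      simp only [List.count_append] at h2
      omega

-- ===== motzkinSet 0 =====
lemma motzkinSet_zero : motzkinSet 0 = {[]} := by
  ext P
  rw [mem_motzkinSet, Finset.mem_singleton, List.length_eq_zero_iff]
  constructor
  · rintro ⟨rfl, -⟩; rfl
  · rintro rfl
    exact ⟨rfl, ⟨by intro i hi; simp at hi; subst hi; simp, rfl⟩⟩

-- ===== weights =====
noncomputable def wgt {R : Type*} [CommSemiring R] (a b c d : R) (P : List MStep) : R :=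
  a ^ horCount P * b ^ upCount P * c ^ shSum MStep.U P * d ^ shSum MStep.H P

lemma Ipoly_eq_wgt {R : Type*} [CommSemiring R] (n : ℕ) (a b c d : R) :
    Ipoly n a b c d = ∑ P ∈ motzkinSet n, wgt a b c d P := rfl

lemma wgt_cons_H {R : Type*} [CommSemiring R] (a b c d : R) (Q : List MStep) :
    wgt a b c d (MStep.H :: Q) = a * wgt a b c d Q := by
  unfold wgt horCount upCount
  rw [shSum_cons_H, shSum_cons_H]
  simp only [List.count_cons, show (MStep.H == MStep.H) = true from rfl,
    show (MStep.H == MStep.U) = false from rfl, if_true, if_false, Bool.false_eq_true,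
    add_zero]
  ring

lemma wgt_U_decomp {R : Type*} [CommSemiring R] (a b c d : R) {Q : List MStep}
    (S : List MStep) (hQ : IsMotzkin Q) :
    wgt a b c d (MStep.U :: (Q ++ MStep.D :: S)) =
      b * wgt (a * d) (b * c) c d Q * wgt a b c d S := by
  unfold wgt horCount upCount
  rw [shSum_P Q S hQ MStep.U (by simp), shSum_P Q S hQ MStep.H (by simp)]
  simp only [List.count_cons, List.count_append,
    show (MStep.U == MStep.H) = false from rfl, show (MStep.U == MStep.U) = true from rfl,
    show (MStep.D == MStep.H) = false from rfl, show (MStep.D == MStep.U) = false from rfl,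
    if_true, if_false, Bool.false_eq_true, add_zero]
  ring


/-- `I 0 a b c d = 1` and, for `n ≥ 1`,
`I n a b c d = a·I (n-1) a b c d + b·∑_{k=2}^{n} I (k-2) (ad) (bc) c d · I (n-k) a b c d`. -/
theorem Ipoly_recurrence {R : Type*} [CommSemiring R] (a b c d : R) :
    Ipoly 0 a b c d = 1 ∧
      ∀ n, 1 ≤ n →
        Ipoly n a b c d =
          a * Ipoly (n - 1) a b c d +
            b * ∑ k ∈ Finset.Icc 2 n,
              Ipoly (k - 2) (a * d) (b * c) c d * Ipoly (n - k) a b c d := by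
  classical
  constructor
  · rw [Ipoly, motzkinSet_zero]
    simp [horCount, upCount, shSum]
  · intro n hn
    rw [Ipoly_eq_wgt,
      ← Finset.sum_filter_add_sum_filter_not (motzkinSet n)
        (fun P => P.head? = some MStep.H) (wgt a b c d)]
    congr 1
    · -- horizontal part
      rw [Ipoly_eq_wgt, Finset.mul_sum]
      apply Finset.sum_bij (fun P _ => P.tail)
      · intro P hP
        simp only [Finset.mem_filter] at hP
        obtain ⟨hPm, hh⟩ := hP
        rw [mem_motzkinSet] at hPm ⊢
        cases P with
        | nil => simp at hh
        | cons x T =>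
          obtain rfl : x = MStep.H := by simpa using hh
          have hl : T.length + 1 = n := by simpa using hPm.1
          exact ⟨by simp; omega, isMotzkin_cons_H.mp hPm.2⟩
      · intro P1 h1 P2 h2 he
        simp only [Finset.mem_filter] at h1 h2
        cases P1 with
        | nil => simp at h1
        | cons x1 T1 =>
          cases P2 with
          | nil => simp at h2
          | cons x2 T2 =>
            obtain rfl : x1 = MStep.H := by simpa using h1.2
            obtain rfl : x2 = MStep.H := by simpa using h2.2
            simp only [List.tail_cons] at he
            rw [he]
      · intro Q hQm
        refine ⟨MStep.H :: Q, ?_, rfl⟩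
        simp only [Finset.mem_filter]
        rw [mem_motzkinSet] at hQm ⊢
        refine ⟨⟨by simp [hQm.1]; omega, isMotzkin_cons_H.mpr hQm.2⟩, rfl⟩
      · intro P hP
        simp only [Finset.mem_filter] at hP
        cases P with
        | nil => simp at hP
        | cons x T =>
          obtain rfl : x = MStep.H := by simpa using hP.2
          rw [List.tail_cons, wgt_cons_H]
    · -- up part
      have hR : b * ∑ k ∈ Finset.Icc 2 n,
            Ipoly (k - 2) (a * d) (b * c) c d * Ipoly (n - k) a b c d
          = ∑ x ∈ (Finset.Icc 2 n).sigma
              (fun k => motzkinSet (k - 2) ×ˢ motzkinSet (n - k)),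
              b * (wgt (a * d) (b * c) c d x.2.1 * wgt a b c d x.2.2) := by
        rw [Finset.mul_sum, Finset.sum_sigma]
        refine Finset.sum_congr rfl fun k _ => ?_
        rw [Ipoly_eq_wgt, Ipoly_eq_wgt, Finset.sum_mul_sum, Finset.mul_sum,
          Finset.sum_product]
        refine Finset.sum_congr rfl fun Q _ => ?_
        rw [Finset.mul_sum]
      rw [hR]
      refine (Finset.sum_bij
        (fun x _ => MStep.U :: (x.2.1 ++ MStep.D :: x.2.2)) ?_ ?_ ?_ ?_).symm
      · rintro ⟨k, Q, S⟩ hx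
        simp only [Finset.mem_sigma, Finset.mem_product, Finset.mem_Icc,
          mem_motzkinSet] at hx
        obtain ⟨⟨hk2, hkn⟩, ⟨hQl, hQm⟩, hSl, hSm⟩ := hx
        simp only [Finset.mem_filter]
        refine ⟨mem_motzkinSet.mpr ⟨?_, isMotzkin_P Q S hQm hSm⟩, by simp⟩
        simp [hQl, hSl]
        omega
      · rintro ⟨k1, Q1, S1⟩ h1 ⟨k2, Q2, S2⟩ h2 he
        simp only [Finset.mem_sigma, Finset.mem_product, Finset.mem_Icc,
          mem_motzkinSet] at h1 h2
        have he' : Q1 ++ MStep.D :: S1 = Q2 ++ MStep.D :: S2 := by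
          simpa using he
        obtain ⟨hq, hs⟩ := decomp_unique h1.2.1.2 h2.2.1.2 he'
        have hk : k1 = k2 := by
          have l1 := h1.2.1.1
          have l2 := h2.2.1.1
          have := h1.1.1
          have := h2.1.1
          rw [hq] at l1
          omega
        subst hk; subst hq; subst hs; rfl
      · intro P hP
        simp only [Finset.mem_filter] at hP
        obtain ⟨hPm, hh⟩ := hP
        rw [mem_motzkinSet] at hPm
        obtain ⟨hl, hm⟩ := hPm
        cases P with
        | nil => simp at hl; omega
        | cons x T =>
          cases x with
          | H => exact absurd rfl hh
          | D =>
            exfalso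
            have := hm.1 1 (by simp)
            simp [List.take_succ_cons] at this
          | U =>
            obtain ⟨Q, S, hQ, hS, rfl⟩ := exists_decomp hm
            refine ⟨⟨Q.length + 2, Q, S⟩, ?_, rfl⟩
            simp only [Finset.mem_sigma, Finset.mem_product, Finset.mem_Icc,
              mem_motzkinSet]
            have hlen : n = Q.length + S.length + 2 := by
              simp at hl; omega
            exact ⟨⟨by omega, by omega⟩, ⟨by omega, hQ⟩, by omega, hS⟩
      · rintro ⟨k, Q, S⟩ hx
        simp only [Finset.mem_sigma, Finset.mem_product, mem_motzkinSet] at hx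
        rw [wgt_U_decomp a b c d S hx.2.1.2]
        ring
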